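/- For every integer n ≥ 1, the semidirect product (Z/2^n Z × Z/2^n Z) ⋊ C_3, where a generator of the cyclic group C_3 of order 3 acts by the automorphism sending (a,b) to (b, -(a+b)), is a 3-pyramidal group. -/

import Mathlib

/-- A finite group is 3-pyramidal if it has exactly three involutions,
which are all conjugate to each other. -/
def IsThreePyramidal (G : Type*) [Group G] : Prop :=
  Nat.card {g : G | orderOf g = 2} = 3 ∧
    ∀ i j : G, orderOf i = 2 → orderOf j = 2 → IsConj i j

/-- The automorphism γ of `ZMod (2^m) × ZMod (2^m)` sending `(a, b)` to `(b, -(a+b))`. -/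
def pyrGamma (m : ℕ) : AddAut (ZMod (2 ^ m) × ZMod (2 ^ m)) where
  toFun p := (p.2, -(p.1 + p.2))
  invFun p := (-(p.1 + p.2), p.1)
  left_inv p := by
    obtain ⟨a, b⟩ := p
    simp only [Prod.mk.injEq]
    constructor <;> first | trivial | ring_nf
  right_inv p := by
    obtain ⟨a, b⟩ := p
    simp only [Prod.mk.injEq]
    constructor <;> first | trivial | ring_nf
  map_add' p q := by
    simp only [Prod.fst_add, Prod.snd_add, Prod.mk.injEq, Prod.mk_add_mk]
    constructor <;> first | trivial | ring_nf

/-- γ as a multiplicative automorphism of the corresponding multiplicative group. -/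
def pyrGammaMul (m : ℕ) : MulAut (Multiplicative (ZMod (2 ^ m) × ZMod (2 ^ m))) :=
  AddEquiv.toMultiplicative (pyrGamma m)

lemma pyrGamma_apply (m : ℕ) (p : ZMod (2^m) × ZMod (2^m)) :
    (pyrGamma m) p = (p.2, -(p.1 + p.2)) := rfl

lemma pyrGammaMul_apply (m : ℕ) (x : Multiplicative (ZMod (2^m) × ZMod (2^m))) :
    (pyrGammaMul m) x = Multiplicative.ofAdd ((pyrGamma m) (Multiplicative.toAdd x)) := rfl

lemma pyrGammaMul_pow_three (m : ℕ) : (pyrGammaMul m) ^ 3 = 1 := by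
  ext1 x
  simp only [pow_succ, pow_zero, one_mul, MulAut.mul_apply, MulAut.one_apply]
  rw [pyrGammaMul_apply, pyrGammaMul_apply, pyrGammaMul_apply]
  conv_rhs => rw [← ofAdd_toAdd x]
  congr 1
  simp only [toAdd_ofAdd]
  rw [pyrGamma_apply, pyrGamma_apply, pyrGamma_apply]
  obtain ⟨a, b⟩ := Multiplicative.toAdd x
  simp only [Prod.mk.injEq]
  constructor <;> ring_nf

lemma pyr_two_pow_ne_zero (n : ℕ) (hn : 1 ≤ n) : (2 : ZMod (2^n)) ^ (n-1) ≠ 0 := by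
  intro h
  have h2 : ((2^(n-1) : ℕ) : ZMod (2^n)) = 0 := by push_cast; exact h
  rw [ZMod.natCast_eq_zero_iff] at h2
  have := Nat.le_of_dvd (Nat.pow_pos (by norm_num)) h2
  have h3 : (2:ℕ)^(n-1) < 2^n := Nat.pow_lt_pow_right one_lt_two (by omega)
  omega

lemma pyr_two_pow_add_self (n : ℕ) (hn : 1 ≤ n) :
    (2 : ZMod (2^n)) ^ (n-1) + (2 : ZMod (2^n)) ^ (n-1) = 0 := by
  have : (2 : ZMod (2^n)) ^ (n-1) + (2 : ZMod (2^n)) ^ (n-1) = 2 ^ (n-1+1) := by ring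
  rw [this, Nat.sub_add_cancel hn]
  have : ((2^n : ℕ) : ZMod (2^n)) = 0 := ZMod.natCast_self _
  push_cast at this
  exact this

lemma pyr_two_torsion (n : ℕ) (hn : 1 ≤ n) (a : ZMod (2^n)) :
    a + a = 0 ↔ a = 0 ∨ a = 2 ^ (n-1) := by
  haveI : NeZero ((2:ℕ)^n) := ⟨pow_ne_zero n two_ne_zero⟩
  constructor
  · intro hAdd
    have hv : ((a.val + a.val : ℕ) : ZMod (2^n)) = 0 := by
      push_cast
      rw [ZMod.natCast_zmod_val]
      exact hAdd
    rw [ZMod.natCast_eq_zero_iff] at hv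
    have h2n : (2:ℕ)^n = 2 * 2^(n-1) := by
      rw [← pow_succ']
      congr 1
      omega
    have hdvd : (2:ℕ)^(n-1) ∣ a.val := by
      have h1 : 2 * 2^(n-1) ∣ 2 * a.val := by
        rw [← h2n, two_mul]
        exact hv
      exact (mul_dvd_mul_iff_left (two_ne_zero)).mp h1
    obtain ⟨k, hk⟩ := hdvd
    have hlt : a.val < 2^n := ZMod.val_lt a
    have hpos : 0 < (2:ℕ)^(n-1) := Nat.pow_pos (by norm_num)
    have hklt : k < 2 := by
      by_contra hc
      push_neg at hc
      have : 2 * 2^(n-1) ≤ 2^(n-1) * k := by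
        calc 2 * 2^(n-1) = 2^(n-1) * 2 := by ring
        _ ≤ 2^(n-1) * k := Nat.mul_le_mul_left _ hc
      omega
    interval_cases k
    · left
      rw [← ZMod.val_eq_zero]
      omega
    · right
      have : a.val = 2^(n-1) := by omega
      calc a = ((a.val : ℕ) : ZMod (2^n)) := (ZMod.natCast_zmod_val a).symm
      _ = ((2^(n-1) : ℕ) : ZMod (2^n)) := by rw [this]
      _ = 2 ^ (n-1) := by push_cast; ring
  · rintro (rfl | rfl)
    · simp
    · exact pyr_two_pow_add_self n hn

lemma pyr_orderOf_gamma (n : ℕ) (hn : 1 ≤ n) : orderOf (pyrGammaMul n) = 3 := by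
  haveI : Fact (Nat.Prime 3) := ⟨by norm_num⟩
  apply orderOf_eq_prime (pyrGammaMul_pow_three n)
  intro h
  haveI : Fact (1 < 2^n) := ⟨Nat.one_lt_two_pow_iff.mpr (by omega)⟩
  have := congrArg (fun f : MulAut (Multiplicative (ZMod (2^n) × ZMod (2^n))) =>
    Multiplicative.toAdd (f (Multiplicative.ofAdd ((1 : ZMod (2^n)), (0 : ZMod (2^n)))))) h
  simp only [pyrGammaMul_apply, MulAut.one_apply, toAdd_ofAdd, pyrGamma_apply] at this
  have h1 : (0 : ZMod (2^n)) = 1 := congrArg Prod.fst this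
  exact one_ne_zero h1.symm

theorem stmt_18 (n : ℕ) (hn : 1 ≤ n) :
    IsThreePyramidal
      (Multiplicative (ZMod (2 ^ n) × ZMod (2 ^ n))
        ⋊[(Subgroup.zpowers (pyrGammaMul n)).subtype] ↥(Subgroup.zpowers (pyrGammaMul n))) := by
  haveI : Fact (Nat.Prime 2) := ⟨Nat.prime_two⟩
  set γ := pyrGammaMul n with hγ
  set S := Subgroup.zpowers γ with hS
  set φ := S.subtype with hφ
  set h : ZMod (2^n) := 2 ^ (n-1) with hh
  set x1 : Multiplicative (ZMod (2^n) × ZMod (2^n)) := Multiplicative.ofAdd (h, 0) with hx1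
  set x2 : Multiplicative (ZMod (2^n) × ZMod (2^n)) := Multiplicative.ofAdd (0, h) with hx2
  set x3 : Multiplicative (ZMod (2^n) × ZMod (2^n)) := Multiplicative.ofAdd (h, h) with hx3
  have hne : h ≠ 0 := pyr_two_pow_ne_zero n hn
  have hadd : h + h = 0 := pyr_two_pow_add_self n hn
  have hnegh : -h = h := neg_eq_of_add_eq_zero_left hadd
  set e1 := SemidirectProduct.inl (φ := φ) x1 with he1
  set e2 := SemidirectProduct.inl (φ := φ) x2 with he2
  set e3 := SemidirectProduct.inl (φ := φ) x3 with he3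
  have hcardS : Nat.card S = 3 := by
    rw [hS, Nat.card_zpowers, pyr_orderOf_gamma n hn]
  -- squares of the candidate involutions are 1
  have hsq : ∀ x : Multiplicative (ZMod (2^n) × ZMod (2^n)),
      Multiplicative.toAdd x + Multiplicative.toAdd x = 0 →
      (SemidirectProduct.inl (φ := φ) x) ^ 2 = 1 := by
    intro x hx
    rw [sq, ← map_mul]
    have : x * x = 1 := by
      rw [← ofAdd_toAdd x, ← ofAdd_add, hx]
      rfl
    rw [this, map_one]
  have horder : ∀ x : Multiplicative (ZMod (2^n) × ZMod (2^n)),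
      Multiplicative.toAdd x + Multiplicative.toAdd x = 0 → x ≠ 1 →
      orderOf (SemidirectProduct.inl (φ := φ) x) = 2 := by
    intro x hx hx1
    exact orderOf_eq_prime (hsq x hx)
      (fun hc => hx1 (SemidirectProduct.inl_injective (hc.trans (map_one _).symm)))
  have hx1add : Multiplicative.toAdd x1 + Multiplicative.toAdd x1 = 0 := by
    rw [hx1]; simp only [toAdd_ofAdd, Prod.mk_add_mk, Prod.mk_eq_zero]
    exact ⟨hadd, by simp⟩
  have hx2add : Multiplicative.toAdd x2 + Multiplicative.toAdd x2 = 0 := by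
    rw [hx2]; simp only [toAdd_ofAdd, Prod.mk_add_mk, Prod.mk_eq_zero]
    exact ⟨by simp, hadd⟩
  have hx3add : Multiplicative.toAdd x3 + Multiplicative.toAdd x3 = 0 := by
    rw [hx3]; simp only [toAdd_ofAdd, Prod.mk_add_mk, Prod.mk_eq_zero]
    exact ⟨hadd, hadd⟩
  have hx1ne : x1 ≠ 1 := by
    rw [hx1]; intro hc
    have : ((h : ZMod (2^n)), (0 : ZMod (2^n))) = 0 := by
      have := congrArg Multiplicative.toAdd hc
      simpa using this
    exact hne (congrArg Prod.fst this)
  have hx2ne : x2 ≠ 1 := by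
    rw [hx2]; intro hc
    have : ((0 : ZMod (2^n)), (h : ZMod (2^n))) = 0 := by
      have := congrArg Multiplicative.toAdd hc
      simpa using this
    exact hne (congrArg Prod.snd this)
  have hx3ne : x3 ≠ 1 := by
    rw [hx3]; intro hc
    have : ((h : ZMod (2^n)), (h : ZMod (2^n))) = 0 := by
      have := congrArg Multiplicative.toAdd hc
      simpa using this
    exact hne (congrArg Prod.fst this)
  have ho1 : orderOf e1 = 2 := horder x1 hx1add hx1ne
  have ho2 : orderOf e2 = 2 := horder x2 hx2add hx2ne
  have ho3 : orderOf e3 = 2 := horder x3 hx3add hx3ne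
  -- characterization of involutions
  have hchar : ∀ g : Multiplicative (ZMod (2^n) × ZMod (2^n)) ⋊[φ] S,
      orderOf g = 2 ↔ g = e1 ∨ g = e2 ∨ g = e3 := by
    intro g
    constructor
    · intro hg
      have h2 : g ^ 2 = 1 := by
        have := pow_orderOf_eq_one g
        rwa [hg] at this
      have hg1 : g ≠ 1 := by
        intro hc; rw [hc, orderOf_one] at hg; norm_num at hg
      have hr : g.right = 1 := by
        have hr2 : g.right ^ 2 = 1 := by
          have := congrArg SemidirectProduct.right h2
          simpa [sq] using this
        have hd2 : orderOf g.right ∣ 2 := orderOf_dvd_of_pow_eq_one hr2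
        have hd3 : orderOf g.right ∣ 3 := hcardS ▸ orderOf_dvd_natCard g.right
        have : orderOf g.right = 1 := Nat.eq_one_of_dvd_coprimes (by decide) hd2 hd3
        exact orderOf_eq_one_iff.mp this
      have hl : g.left * g.left = 1 := by
        have := congrArg SemidirectProduct.left h2
        simpa [sq, SemidirectProduct.mul_left, hr] using this
      have hgin : g = SemidirectProduct.inl (φ := φ) g.left := by
        ext1
        · simp
        · simp [hr]
      have hladd : Multiplicative.toAdd g.left + Multiplicative.toAdd g.left = 0 := by
        have := congrArg Multiplicative.toAdd hl
        simpa using this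
      have h1 : (Multiplicative.toAdd g.left).1 + (Multiplicative.toAdd g.left).1 = 0 :=
        congrArg Prod.fst hladd
      have h2' : (Multiplicative.toAdd g.left).2 + (Multiplicative.toAdd g.left).2 = 0 :=
        congrArg Prod.snd hladd
      rw [pyr_two_torsion n hn] at h1 h2'
      have hglne : g.left ≠ 1 := by
        intro hc
        rw [hc, map_one] at hgin
        exact hg1 hgin
      have hpne : Multiplicative.toAdd g.left ≠ 0 := by
        intro hc
        apply hglne
        rw [← ofAdd_toAdd g.left, hc]
        rfl
      rcases h1 with h1 | h1 <;> rcases h2' with h2' | h2'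
      · exfalso; apply hpne; rw [Prod.ext_iff]; exact ⟨h1, h2'⟩
      · right; left
        rw [hgin, he2, hx2, SemidirectProduct.inl_inj, ← ofAdd_toAdd g.left]
        exact congrArg _ (Prod.ext_iff.mpr ⟨h1, h2'⟩)
      · left
        rw [hgin, he1, hx1, SemidirectProduct.inl_inj, ← ofAdd_toAdd g.left]
        exact congrArg _ (Prod.ext_iff.mpr ⟨h1, h2'⟩)
      · right; right
        rw [hgin, he3, hx3, SemidirectProduct.inl_inj, ← ofAdd_toAdd g.left]
        exact congrArg _ (Prod.ext_iff.mpr ⟨h1, h2'⟩)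
    · rintro (rfl | rfl | rfl) <;> assumption
  -- conjugating element
  set t : Multiplicative (ZMod (2^n) × ZMod (2^n)) ⋊[φ] S :=
    SemidirectProduct.inr ⟨γ, Subgroup.mem_zpowers γ⟩ with ht
  have hconj : ∀ x : Multiplicative (ZMod (2^n) × ZMod (2^n)),
      t * SemidirectProduct.inl (φ := φ) x * t⁻¹ = SemidirectProduct.inl (φ := φ) (γ x) := by
    intro x
    ext1
    · simp [ht, SemidirectProduct.mul_left, hφ]
    · simp [ht]
  have hγ1 : γ x1 = x2 := by
    rw [hx1, hx2, pyrGammaMul_apply]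
    congr 1
    simp only [toAdd_ofAdd, pyrGamma_apply]
    rw [Prod.ext_iff]
    constructor
    · rfl
    · show -(h + 0) = h
      rw [add_zero, hnegh]
  have hγ2 : γ x2 = x3 := by
    rw [hx2, hx3, pyrGammaMul_apply]
    congr 1
    simp only [toAdd_ofAdd, pyrGamma_apply]
    rw [Prod.ext_iff]
    constructor
    · rfl
    · show -(0 + h) = h
      rw [zero_add, hnegh]
  have hγ3 : γ x3 = x1 := by
    rw [hx3, hx1, pyrGammaMul_apply]
    congr 1
    simp only [toAdd_ofAdd, pyrGamma_apply]
    rw [Prod.ext_iff]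
    constructor
    · rfl
    · show -(h + h) = 0
      rw [hadd, neg_zero]
  have c12 : IsConj e1 e2 := isConj_iff.mpr ⟨t, by rw [hconj, hγ1]⟩
  have c23 : IsConj e2 e3 := isConj_iff.mpr ⟨t, by rw [hconj, hγ2]⟩
  have c13 : IsConj e1 e3 := c12.trans c23
  have hne12 : e1 ≠ e2 := by
    rw [he1, he2, Ne, SemidirectProduct.inl_inj, hx1, hx2]
    intro hc
    have := congrArg Multiplicative.toAdd hc
    simp only [toAdd_ofAdd, Prod.mk.injEq] at this
    exact hne this.1
  have hne13 : e1 ≠ e3 := by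
    rw [he1, he3, Ne, SemidirectProduct.inl_inj, hx1, hx3]
    intro hc
    have := congrArg Multiplicative.toAdd hc
    simp only [toAdd_ofAdd, Prod.mk.injEq] at this
    exact hne this.2.symm
  have hne23 : e2 ≠ e3 := by
    rw [he2, he3, Ne, SemidirectProduct.inl_inj, hx2, hx3]
    intro hc
    have := congrArg Multiplicative.toAdd hc
    simp only [toAdd_ofAdd, Prod.mk.injEq] at this
    exact hne this.1.symm
  constructor
  · have hset : {g : Multiplicative (ZMod (2^n) × ZMod (2^n)) ⋊[φ] S | orderOf g = 2}
        = {e1, e2, e3} := by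
      ext g
      simp only [Set.mem_setOf_eq, Set.mem_insert_iff, Set.mem_singleton_iff]
      exact hchar g
    rw [hset, Nat.card_coe_set_eq]
    exact Set.ncard_eq_three.mpr ⟨e1, e2, e3, hne12, hne13, hne23, rfl⟩
  · intro i j hi hj
    rcases (hchar i).mp hi with rfl | rfl | rfl <;>
      rcases (hchar j).mp hj with rfl | rfl | rfl <;>
      first
        | exact IsConj.refl _
        | exact c12 | exact c23 | exact c13
        | exact c12.symm | exact c23.symm | exact c13.symm
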